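/- Let A be an n×n irreducible matrix with non-negative real entries whose spectral radius is at most 1. Let M be the maximum entry of A and m the minimum among the strictly positive entries of A. Then M ≤ m^{-n}. -/

import Mathlib

open Polynomial in
lemma root_charpoly_mem_spectrum {n : ℕ} (B : Matrix (Fin n) (Fin n) ℂ) (μ : ℂ)
    (h : B.charpoly.IsRoot μ) : μ ∈ spectrum ℂ B := by
  rw [spectrum.mem_iff]
  have hdet : ((B.charmatrix).map (evalRingHom μ)).det = 0 := by
    have := RingHom.map_det (evalRingHom μ) B.charmatrix
    rw [RingHom.mapMatrix_apply] at this
    rw [← this]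
    simpa [Matrix.charpoly] using h
  have hmat : (B.charmatrix).map (evalRingHom μ) = algebraMap ℂ _ μ - B := by
    ext i j
    rcases eq_or_ne i j with rfl | hij
    · simp [Matrix.charmatrix_apply_eq, Matrix.map_apply, Matrix.algebraMap_matrix_apply,
        Matrix.sub_apply]
    · simp [Matrix.charmatrix_apply_ne _ _ _ hij, Matrix.map_apply,
        Matrix.algebraMap_matrix_apply, hij, Matrix.sub_apply]
  intro hu
  rw [← hmat] at hu
  rw [Matrix.isUnit_iff_isUnit_det] at hu
  rw [hdet] at hu
  simp at hu


lemma pow_entry_nonneg {n : ℕ} (A : Matrix (Fin n) (Fin n) ℝ)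
    (hA : ∀ i j, 0 ≤ A i j) (k : ℕ) : ∀ i j, 0 ≤ (A ^ k) i j := by
  induction' k with k ih
  · intro i j; rw [pow_zero]
    rcases eq_or_ne i j with rfl | h
    · simp [Matrix.one_apply]
    · simp [Matrix.one_apply, h]
  · intro i j
    rw [pow_succ, Matrix.mul_apply]
    exact Finset.sum_nonneg fun x _ => mul_nonneg (ih i x) (hA x j)

open Polynomial in
lemma diag_pow_le_card {n : ℕ} (A : Matrix (Fin n) (Fin n) ℝ)
    (hA : ∀ i j, 0 ≤ A i j)
    (hspec : ∀ μ ∈ spectrum ℂ (A.map ((↑) : ℝ → ℂ)), ‖μ‖ ≤ 1)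
    {k : ℕ} (hk : 0 < k) (j : Fin n) : (A ^ k) j j ≤ (n : ℝ) := by
  classical
  set B : Matrix (Fin n) (Fin n) ℂ := A.map ((↑) : ℝ → ℂ) with hB
  -- every root of charpoly of B^k has modulus ≤ 1
  have hroots : ∀ μ ∈ (B ^ k).charpoly.roots, ‖μ‖ ≤ 1 := by
    intro μ hμ
    have hrt : (B ^ k).charpoly.IsRoot μ := (Polynomial.isRoot_of_mem_roots hμ)
    have hsp := root_charpoly_mem_spectrum _ _ hrt
    rw [spectrum.map_pow_of_pos B hk] at hsp
    obtain ⟨ν, hν, rfl⟩ := hsp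
    calc ‖ν ^ k‖ = ‖ν‖ ^ k := by simp [map_pow]
    _ ≤ 1 ^ k := pow_le_pow_left₀ (norm_nonneg _) (hspec ν hν) k
    _ = 1 := one_pow k
  -- number of roots is n
  have hcard : Multiset.card (B ^ k).charpoly.roots = n := by
    have hs := (Polynomial.splits_iff_card_roots).mp (IsAlgClosed.splits (B ^ k).charpoly)
    rw [hs, Matrix.charpoly_natDegree_eq_dim, Fintype.card_fin]
  -- trace bound
  have htr : ‖(B ^ k).trace‖ ≤ (n : ℝ) := by
    rw [Matrix.trace_eq_sum_roots_charpoly]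
    calc ‖(B ^ k).charpoly.roots.sum‖
        ≤ (((B ^ k).charpoly.roots).map (fun x => ‖x‖)).sum := by
          exact norm_multiset_sum_le ((B ^ k).charpoly.roots)
      _ ≤ Multiset.card (((B ^ k).charpoly.roots).map (fun x => ‖x‖)) • (1 : ℝ) := by
          apply Multiset.sum_le_card_nsmul
          intro x hx
          obtain ⟨μ, hμ, rfl⟩ := Multiset.mem_map.mp hx
          exact hroots μ hμ
      _ = (n : ℝ) := by simp [hcard]
  -- transfer to real trace
  have hBk : B ^ k = (A ^ k).map ((↑) : ℝ → ℂ) := by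
    have := map_pow ((algebraMap ℝ ℂ).mapMatrix) A k
    simpa [RingHom.mapMatrix_apply, hB] using this.symm
  have htr2 : (A ^ k).trace ≤ (n : ℝ) := by
    have : ((B ^ k).trace) = (((A ^ k).trace : ℝ) : ℂ) := by
      rw [hBk]
      exact (AddMonoidHom.map_trace (Complex.ofRealHom.toAddMonoidHom) _).symm
    rw [this, Complex.norm_real, Real.norm_eq_abs] at htr
    exact (le_abs_self _).trans htr
  -- diagonal entry ≤ trace
  calc (A ^ k) j j ≤ (A ^ k).trace := by
        rw [Matrix.trace]
        exact Finset.single_le_sum (f := fun i => (A ^ k) i i)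
          (fun i _ => pow_entry_nonneg A hA k i i) (Finset.mem_univ j)
    _ ≤ (n : ℝ) := htr2

lemma entry_mul_le {n : ℕ} (B C : Matrix (Fin n) (Fin n) ℝ)
    (hB : ∀ i j, 0 ≤ B i j) (hC : ∀ i j, 0 ≤ C i j) (i k j : Fin n) :
    B i k * C k j ≤ (B * C) i j := by
  rw [Matrix.mul_apply]
  exact Finset.single_le_sum (f := fun x => B i x * C x j)
    (fun x _ => mul_nonneg (hB i x) (hC x j)) (Finset.mem_univ k)

lemma diag_pow_le_one {n : ℕ} (A : Matrix (Fin n) (Fin n) ℝ)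
    (hA : ∀ i j, 0 ≤ A i j)
    (hspec : ∀ μ ∈ spectrum ℂ (A.map ((↑) : ℝ → ℂ)), ‖μ‖ ≤ 1)
    {k : ℕ} (hk : 0 < k) (j : Fin n) : (A ^ k) j j ≤ 1 := by
  set d := (A ^ k) j j with hd
  have hd0 : 0 ≤ d := pow_entry_nonneg A hA k j j
  by_contra hgt
  push_neg at hgt
  obtain ⟨s, hs⟩ := pow_unbounded_of_one_lt (n : ℝ) hgt
  have hsup : ∀ s : ℕ, d ^ s ≤ (A ^ (k * s)) j j := by
    intro s
    induction' s with s ih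
    · simp [Matrix.one_apply]
    · calc d ^ (s + 1) = d ^ s * d := by ring
        _ ≤ (A ^ (k * s)) j j * (A ^ k) j j :=
          mul_le_mul ih le_rfl hd0 (pow_entry_nonneg A hA _ j j)
        _ ≤ ((A ^ (k * s)) * (A ^ k)) j j :=
          entry_mul_le _ _ (pow_entry_nonneg A hA _) (pow_entry_nonneg A hA _) j j j
        _ = (A ^ (k * (s + 1))) j j := by rw [← pow_add, Nat.mul_succ]
  rcases Nat.eq_zero_or_pos s with rfl | hs0
  · have h1 : (n : ℝ) < 1 := by simpa using hs
    have hn0 : n = 0 := by exact_mod_cast Nat.lt_one_iff.mp (by exact_mod_cast h1)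
    subst hn0; exact j.elim0
  · have h1 := hsup s
    have h2 := diag_pow_le_card A hA hspec (Nat.mul_pos hk hs0) j
    linarith

lemma exists_walk_of_pow_pos {n : ℕ} (A : Matrix (Fin n) (Fin n) ℝ)
    (hA : ∀ i j, 0 ≤ A i j) :
    ∀ (l : ℕ) (j i : Fin n), 0 < (A ^ l) j i →
      ∃ f : ℕ → Fin n, f 0 = j ∧ f l = i ∧ ∀ t < l, 0 < A (f t) (f (t + 1)) := by
  intro l
  induction' l with l ih
  · intro j i h
    rw [pow_zero] at h
    rcases eq_or_ne j i with rfl | hij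
    · exact ⟨fun _ => j, rfl, rfl, by omega⟩
    · simp [Matrix.one_apply, hij] at h
  · intro j i h
    rw [pow_succ, Matrix.mul_apply] at h
    obtain ⟨k, hk⟩ : ∃ k, 0 < (A ^ l) j k * A k i := by
      by_contra hc
      push_neg at hc
      have : ∑ x, (A ^ l) j x * A x i ≤ 0 :=
        Finset.sum_nonpos fun x _ => hc x
      linarith
    have h1 : 0 < (A ^ l) j k := by
      nlinarith [hA k i, pow_entry_nonneg A hA l j k]
    have h2 : 0 < A k i := by
      nlinarith [hA k i, pow_entry_nonneg A hA l j k]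
    obtain ⟨f, hf0, hfl, hfs⟩ := ih j k h1
    refine ⟨fun t => if t ≤ l then f t else i, by simpa using hf0, by simp, ?_⟩
    intro t ht
    rcases Nat.lt_or_ge t l with h' | h'
    · have e1 : t ≤ l := h'.le
      have e2 : t + 1 ≤ l := h'
      simp only [e1, e2, if_pos]
      exact hfs t h'
    · have : t = l := by omega
      subst this
      simp only [le_refl, if_pos, Nat.lt_irrefl]
      rw [if_neg (by omega)]
      rw [hfl]
      exact h2

lemma pow_pos_of_walk {n : ℕ} (A : Matrix (Fin n) (Fin n) ℝ)
    (hA : ∀ i j, 0 ≤ A i j) {m : ℝ} (hm : ∀ i j, 0 < A i j → m ≤ A i j) (hm0 : 0 < m) :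
    ∀ (l : ℕ) (f : ℕ → Fin n), (∀ t < l, 0 < A (f t) (f (t + 1))) →
      m ^ l ≤ (A ^ l) (f 0) (f l) := by
  intro l
  induction' l with l ih
  · intro f _; simp [Matrix.one_apply]
  · intro f hf
    have hstep : 0 < A (f l) (f (l + 1)) := hf l (Nat.lt_succ_self l)
    calc m ^ (l + 1) = m ^ l * m := by ring
      _ ≤ (A ^ l) (f 0) (f l) * A (f l) (f (l + 1)) := by
          apply mul_le_mul (ih f fun t ht => hf t (ht.trans (Nat.lt_succ_self l)))
            (hm _ _ hstep) hm0.le (pow_entry_nonneg A hA l _ _)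
      _ ≤ ((A ^ l) * A) (f 0) (f (l + 1)) :=
          entry_mul_le _ _ (pow_entry_nonneg A hA l) hA _ _ _
      _ = (A ^ (l + 1)) (f 0) (f (l + 1)) := by rw [← pow_succ]

lemma pow_entry_lb {n : ℕ} (A : Matrix (Fin n) (Fin n) ℝ)
    (hA : ∀ i j, 0 ≤ A i j) {m : ℝ} (hm : ∀ i j, 0 < A i j → m ≤ A i j) (hm0 : 0 < m)
    {l : ℕ} {j i : Fin n} (h : 0 < (A ^ l) j i) : m ^ l ≤ (A ^ l) j i := by
  obtain ⟨f, hf0, hfl, hfs⟩ := exists_walk_of_pow_pos A hA l j i h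
  have := pow_pos_of_walk A hA hm hm0 l f hfs
  rwa [hf0, hfl] at this

lemma shorten_walk {n : ℕ} (A : Matrix (Fin n) (Fin n) ℝ)
    (hA : ∀ i j, 0 ≤ A i j) {m : ℝ} (hm : ∀ i j, 0 < A i j → m ≤ A i j) (hm0 : 0 < m)
    {j i : Fin n} : ∀ l : ℕ, 1 ≤ l → 0 < (A ^ l) j i →
      ∃ l', 1 ≤ l' ∧ l' ≤ n ∧ 0 < (A ^ l') j i := by
  intro l
  induction' l using Nat.strong_induction_on with l ih
  intro hl1 hpos
  rcases le_or_gt l n with hle | hgt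
  · exact ⟨l, hl1, hle, hpos⟩
  · -- l > n : find a repeated vertex among f 0, ..., f (l-1)
    obtain ⟨f, hf0, hfl, hfs⟩ := exists_walk_of_pow_pos A hA l j i hpos
    obtain ⟨s, hs, t, ht, hst, hfe⟩ :=
      Finset.exists_ne_map_eq_of_card_lt_of_maps_to
        (s := Finset.range l) (t := Finset.univ (α := Fin n))
        (by simpa using hgt) (fun x _ => Finset.mem_univ (f x))
    rw [Finset.mem_range] at hs ht
    have key : ∀ s t : ℕ, s < t → t < l → f s = f t →
        ∃ l', 1 ≤ l' ∧ l' ≤ n ∧ 0 < (A ^ l') j i := by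
      intro s t hlt htl hfe
      set d := t - s with hd
      have hd1 : 1 ≤ d := by omega
      set l' := l - d with hl'
      have hl'1 : 1 ≤ l' := by omega
      have hl'l : l' < l := by omega
      have hl's : s < l' := by omega
      set g : ℕ → Fin n := fun u => if u ≤ s then f u else f (u + d) with hg
      have hg0 : g 0 = j := by simp [hg, hf0]
      have hgl : g l' = i := by
        have : ¬ (l' ≤ s) := by omega
        simp only [hg, this, if_false]
        have : l' + d = l := by omega
        rw [this, hfl]
      have hgs : ∀ u < l', 0 < A (g u) (g (u + 1)) := by
        intro u hu
        rcases Nat.lt_or_ge u s with h1 | h1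
        · have e1 : u ≤ s := h1.le
          have e2 : u + 1 ≤ s := h1
          simp only [hg]
          rw [if_pos e1, if_pos e2]
          exact hfs u (by omega)
        rcases Nat.eq_or_lt_of_le h1 with heq | h2
        · have e1 : u ≤ s := heq.ge
          have e2 : ¬ (u + 1 ≤ s) := by omega
          simp only [hg]
          rw [if_pos e1, if_neg e2]
          have h3 : f u = f t := heq ▸ hfe
          have h4 : u + 1 + d = t + 1 := by omega
          rw [h3, h4]
          exact hfs t htl
        · have e1 : ¬ (u ≤ s) := by omega
          have e2 : ¬ (u + 1 ≤ s) := by omega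
          simp only [hg]
          rw [if_neg e1, if_neg e2]
          have : u + d + 1 = u + 1 + d := by omega
          rw [← this]
          exact hfs (u + d) (by omega)
      have hpos' : 0 < (A ^ l') j i := by
        have := pow_pos_of_walk A hA hm hm0 l' g hgs
        rw [hg0, hgl] at this
        exact lt_of_lt_of_le (pow_pos hm0 l') this
      exact ih l' hl'l hl'1 hpos'
    rcases hst.lt_or_gt with hlt | hlt
    · exact key s t hlt ht hfe
    · exact key t s hlt hs hfe.symm


/-- For an `n × n` irreducible non-negative real matrix `A` whose spectral
radius is at most `1` (all complex eigenvalues have modulus at most `1`), the maximum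
entry `M` and the minimum strictly positive entry `m` satisfy `M ≤ m⁻¹ ^ n`. -/
theorem max_entry_le_inv_min_pos_entry_pow
    {n : ℕ} (hn : 0 < n) (A : Matrix (Fin n) (Fin n) ℝ)
    (hA : ∀ i j, 0 ≤ A i j)
    (hirr : ∀ i j, ∃ l : ℕ, 0 < (A ^ l) i j)
    (hspec : ∀ μ ∈ spectrum ℂ (A.map ((↑) : ℝ → ℂ)), ‖μ‖ ≤ 1)
    (M m : ℝ)
    (hM : ∀ i j, A i j ≤ M) (hM' : ∃ i j, A i j = M)
    (hm : ∀ i j, 0 < A i j → m ≤ A i j) (hm' : ∃ i j, 0 < A i j ∧ A i j = m) :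
    M ≤ m⁻¹ ^ n := by
  obtain ⟨i0, j0, hpos0, heq0⟩ := hm'
  have hm0 : 0 < m := heq0 ▸ hpos0
  have hm1 : m ≤ 1 := by
    by_contra hgt
    push_neg at hgt
    obtain ⟨l, hl⟩ := hirr j0 i0
    have hstep : 0 < (A ^ (l + 1)) j0 j0 := by
      have h1 := entry_mul_le (A ^ l) A (pow_entry_nonneg A hA l) hA j0 i0 j0
      rw [← pow_succ] at h1
      have h2 : 0 < (A ^ l) j0 i0 * A i0 j0 := mul_pos hl hpos0
      linarith
    have hlb : m ^ (l + 1) ≤ (A ^ (l + 1)) j0 j0 := pow_entry_lb A hA hm hm0 hstep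
    have hub := diag_pow_le_one A hA hspec (Nat.succ_pos l) j0
    have hgt' : (1 : ℝ) < m ^ (l + 1) := one_lt_pow₀ hgt (by omega)
    linarith
  have hminv : 1 ≤ m⁻¹ := by
    rw [one_le_inv_iff₀]
    exact ⟨hm0, hm1⟩
  have hpowtarget : (1 : ℝ) ≤ m⁻¹ ^ n := one_le_pow₀ hminv
  obtain ⟨i1, j1, hMeq⟩ := hM'
  have hM0 : 0 < M := lt_of_lt_of_le hm0 (heq0 ▸ hM i0 j0)
  obtain ⟨l, hl⟩ := hirr j1 i1
  rcases Nat.eq_zero_or_pos l with rfl | hl1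
  · have hji : j1 = i1 := by
      by_contra hne
      rw [pow_zero] at hl
      simp [Matrix.one_apply, hne] at hl
    have h1 : (A ^ 1) i1 i1 ≤ 1 := diag_pow_le_one A hA hspec one_pos i1
    rw [pow_one] at h1
    have hM1 : M ≤ 1 := by
      rw [← hMeq, hji]
      exact h1
    linarith
  · obtain ⟨l', hl'1, hl'n, hl'pos⟩ := shorten_walk A hA hm hm0 l hl1 hl
    have hlb : m ^ l' ≤ (A ^ l') j1 i1 := pow_entry_lb A hA hm hm0 hl'pos
    have hstep : (A ^ l') j1 i1 * A i1 j1 ≤ (A ^ (l' + 1)) j1 j1 := by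
      have h1 := entry_mul_le (A ^ l') A (pow_entry_nonneg A hA l') hA j1 i1 j1
      rwa [← pow_succ] at h1
    have hub : (A ^ (l' + 1)) j1 j1 ≤ 1 := diag_pow_le_one A hA hspec (Nat.succ_pos l') j1
    have hfin : m ^ l' * M ≤ 1 := by
      calc m ^ l' * M = m ^ l' * A i1 j1 := by rw [hMeq]
        _ ≤ (A ^ l') j1 i1 * A i1 j1 :=
            mul_le_mul_of_nonneg_right hlb (hA i1 j1)
        _ ≤ (A ^ (l' + 1)) j1 j1 := hstep
        _ ≤ 1 := hub
    have hMle : M ≤ (m ^ l')⁻¹ := by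
      rw [← one_div, le_div_iff₀ (pow_pos hm0 l')]
      linarith [hfin, mul_comm (m ^ l') M]
    calc M ≤ (m ^ l')⁻¹ := hMle
      _ = m⁻¹ ^ l' := by rw [inv_pow]
      _ ≤ m⁻¹ ^ n := pow_le_pow_right₀ hminv hl'n
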